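/- Let V ⊆ ℂⁿ be an isotropic subspace and let M: ℂⁿ → ℂⁿ be a linear map with M(V ⊕ sV) = 0 and image of M contained in V. Then N = M − M* satisfies: N(V) = 0, N maps sV into (V ⊕ sV)^⊥, N maps (V ⊕ sV)^⊥ into V; in particular N² maps sV into V, and N³ = 0. -/

import Mathlib

set_option synthInstance.maxHeartbeats 1000000
set_option maxHeartbeats 1000000

open scoped Matrix ComplexConjugate

/-- The matrix `s = diag(-I_p, I_q)`. -/
noncomputable def sMat (p q : ℕ) : Matrix (Fin (p + q)) (Fin (p + q)) ℂ :=
  Matrix.diagonal fun i => if (i : ℕ) < p then (-1 : ℂ) else 1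

/-- The Hermitian form `⟨v,w⟩ = -∑_{i<p} conj(v_i) w_i + ∑_{i≥p} conj(v_i) w_i`
of signature `(p,q)` on `ℂⁿ`, `n = p + q`. -/
noncomputable def herm (p q : ℕ) (v w : Fin (p + q) → ℂ) : ℂ :=
  dotProduct (star v) ((sMat p q).mulVec w)

/-- The adjoint `A* = s Aᴴ s` of a matrix with respect to the form `herm p q`. -/
noncomputable def adjUpq (p q : ℕ) (A : Matrix (Fin (p + q)) (Fin (p + q)) ℂ) :
    Matrix (Fin (p + q)) (Fin (p + q)) ℂ :=
  sMat p q * Aᴴ * sMat p q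

/-- A subspace is isotropic for the form `herm p q`. -/
def IsIsotropic (p q : ℕ) (V : Submodule ℂ (Fin (p + q) → ℂ)) : Prop :=
  ∀ v ∈ V, ∀ w ∈ V, herm p q v w = 0

lemma sMat_mul_sMat (p q : ℕ) : sMat p q * sMat p q = 1 := by
  rw [sMat, Matrix.diagonal_mul_diagonal]
  have : (fun i : Fin (p+q) => (if (i : ℕ) < p then (-1 : ℂ) else 1) *
      (if (i : ℕ) < p then (-1 : ℂ) else 1)) = fun _ => (1 : ℂ) := by
    funext i
    by_cases h : (i : ℕ) < p <;> simp [h]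
  rw [this, Matrix.diagonal_one]

lemma sMat_conjTranspose (p q : ℕ) : (sMat p q)ᴴ = sMat p q := by
  rw [sMat, Matrix.diagonal_conjTranspose]
  have : (star fun i : Fin (p+q) => if (i : ℕ) < p then (-1 : ℂ) else 1) =
      fun i : Fin (p+q) => if (i : ℕ) < p then (-1 : ℂ) else 1 := by
    funext i
    by_cases h : (i : ℕ) < p <;> simp [h, Pi.star_apply]
  rw [this]

lemma herm_adj_right (p q : ℕ) (A : Matrix (Fin (p + q)) (Fin (p + q)) ℂ)
    (x y : Fin (p + q) → ℂ) :
    herm p q x ((adjUpq p q A).mulVec y) = herm p q (A.mulVec x) y := by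
  unfold herm adjUpq
  rw [Matrix.star_mulVec, Matrix.mulVec_mulVec, ← Matrix.dotProduct_mulVec,
    Matrix.mulVec_mulVec]
  have : sMat p q * (sMat p q * Aᴴ * sMat p q) = Aᴴ * sMat p q := by
    rw [← Matrix.mul_assoc, ← Matrix.mul_assoc, sMat_mul_sMat, Matrix.one_mul]
  rw [this]

lemma herm_nondeg (p q : ℕ) (w : Fin (p + q) → ℂ)
    (h : ∀ x, herm p q x w = 0) : w = 0 := by
  have hs : (sMat p q).mulVec w = 0 := by
    funext i
    have h1 := h (Pi.single (M := fun _ : Fin (p + q) => ℂ) i 1)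
    rw [herm] at h1
    have h2 : star (Pi.single (M := fun _ : Fin (p + q) => ℂ) i 1) =
        Pi.single (M := fun _ : Fin (p + q) => ℂ) i 1 := by
      funext j
      simp [Pi.single_apply, apply_ite (star : ℂ → ℂ)]
    rw [h2, single_dotProduct, one_mul] at h1
    simpa using h1
  have h3 : (sMat p q).mulVec ((sMat p q).mulVec w) = 0 := by
    rw [hs, Matrix.mulVec_zero]
  rwa [Matrix.mulVec_mulVec, sMat_mul_sMat, Matrix.one_mulVec] at h3

lemma mulVec_eq_zero (p q : ℕ) (A : Matrix (Fin (p + q)) (Fin (p + q)) ℂ)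
    (h : ∀ x, A.mulVec x = 0) : A = 0 := by
  ext i j
  have := congrFun (h (Pi.single j 1)) i
  simpa using this

/-- **Structure of the nilpotent maps `N = M - M*` (discussion before Lemma 4.4).**
Let `V` be isotropic and `M` a linear map with `M(V ⊕ sV) = 0` and `im M ⊆ V`.  Then
`N = M - M*` kills `V`, maps `sV` into `(V ⊕ sV)^⊥` and `(V ⊕ sV)^⊥` into `V`;
in particular `N²` maps `sV` into `V`, and `N³ = 0`. -/
theorem N_three_step_nilpotent (p q : ℕ)
    (V : Submodule ℂ (Fin (p + q) → ℂ)) (hV : IsIsotropic p q V)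
    (M : Matrix (Fin (p + q)) (Fin (p + q)) ℂ)
    (hMker : ∀ x ∈ V ⊔ V.map (sMat p q).mulVecLin, M.mulVec x = 0)
    (hMran : LinearMap.range M.mulVecLin ≤ V)
    (N : Matrix (Fin (p + q)) (Fin (p + q)) ℂ) (hN : N = M - adjUpq p q M) :
    (∀ v ∈ V, N.mulVec v = 0) ∧
    (∀ u ∈ V.map (sMat p q).mulVecLin,
      ∀ y ∈ V ⊔ V.map (sMat p q).mulVecLin, herm p q y (N.mulVec u) = 0) ∧
    (∀ w : Fin (p + q) → ℂ,
      (∀ y ∈ V ⊔ V.map (sMat p q).mulVecLin, herm p q y w = 0) → N.mulVec w ∈ V) ∧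
    (∀ u ∈ V.map (sMat p q).mulVecLin, (N * N).mulVec u ∈ V) ∧
    N ^ 3 = 0 := by
  set M' := adjUpq p q M with hM'
  have hMV : ∀ x, M.mulVec x ∈ V := fun x => hMran ⟨x, rfl⟩
  -- M* kills V
  have hA : ∀ v ∈ V, M'.mulVec v = 0 := by
    intro v hv
    apply herm_nondeg
    intro x
    rw [hM', herm_adj_right]
    exact hV _ (hMV x) v hv
  -- N kills V
  have fact1 : ∀ v ∈ V, N.mulVec v = 0 := by
    intro v hv
    rw [hN, Matrix.sub_mulVec, hMker v (Submodule.mem_sup_left hv), hA v hv, sub_zero]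
  -- N maps sV into the perp of V ⊔ sV
  have fact2 : ∀ u ∈ V.map (sMat p q).mulVecLin,
      ∀ y ∈ V ⊔ V.map (sMat p q).mulVecLin, herm p q y (N.mulVec u) = 0 := by
    intro u hu y hy
    have hu' : u ∈ V ⊔ V.map (sMat p q).mulVecLin := Submodule.mem_sup_right hu
    rw [hN, Matrix.sub_mulVec, hMker u hu']
    have h0 : herm p q y (0 - M'.mulVec u) = - herm p q y (M'.mulVec u) := by
      rw [zero_sub]
      simp [herm, Matrix.mulVec_neg, dotProduct_neg]
    rw [h0, hM', herm_adj_right, hMker y hy]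
    simp [herm, zero_dotProduct]
  -- N maps the perp of V ⊔ sV into V
  have fact3 : ∀ w : Fin (p + q) → ℂ,
      (∀ y ∈ V ⊔ V.map (sMat p q).mulVecLin, herm p q y w = 0) → N.mulVec w ∈ V := by
    intro w hw
    have hM'w : M'.mulVec w = 0 := by
      apply herm_nondeg
      intro x
      rw [hM', herm_adj_right]
      exact hw _ (Submodule.mem_sup_left (hMV x))
    rw [hN, Matrix.sub_mulVec, hM'w, sub_zero]
    exact hMV w
  refine ⟨fact1, fact2, fact3, ?_, ?_⟩
  · intro u hu
    rw [← Matrix.mulVec_mulVec]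
    exact fact3 _ (fun y hy => fact2 u hu y hy)
  · -- algebraic identities
    have scancel : ∀ X : Matrix (Fin (p+q)) (Fin (p+q)) ℂ,
        sMat p q * (sMat p q * X) = X := fun X => by
      rw [← Matrix.mul_assoc, sMat_mul_sMat, Matrix.one_mul]
    have hMM : M * M = 0 := by
      apply mulVec_eq_zero
      intro x
      rw [← Matrix.mulVec_mulVec]
      exact hMker _ (Submodule.mem_sup_left (hMV x))
    have hM'M : M' * M = 0 := by
      apply mulVec_eq_zero
      intro x
      rw [← Matrix.mulVec_mulVec]
      exact hA _ (hMV x)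
    have hM'M' : M' * M' = 0 := by
      rw [hM', adjUpq]
      simp only [Matrix.mul_assoc, scancel]
      rw [← Matrix.mul_assoc Mᴴ Mᴴ, ← Matrix.conjTranspose_mul, hMM]
      simp
    have hNN : N * N = -(M * M') := by
      rw [hN, Matrix.sub_mul, Matrix.mul_sub, Matrix.mul_sub, hMM, hM'M, hM'M']
      abel
    have h3 : N ^ 3 = (N * N) * N := by
      rw [pow_succ, sq]
    rw [h3, hNN, hN]
    simp [Matrix.neg_mul, Matrix.mul_sub, Matrix.mul_assoc, hM'M, hM'M']
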